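/- Let p, u, v, w, q, z be real numbers. Define F : ℝ³ → Matrix 3 3 ℝ by F(y) = [[p, (u − v + (u+v)·e^{−2y₁})/2, (−u + v + (u+v)·e^{−2y₁})/2], [(w − z + (w+z)·e^{−2y₁})/2, q, −q], [(−w + z + (w+z)·e^{−2y₁})/2, −q, q]], let B(y) = (F(y) − F(y)ᵀ)/2 be its antisymmetric part, and define the torsion H_{ijk}(y) = ∂_{y_i}B_{jk}(y) + ∂_{y_j}B_{ki}(y) + ∂_{y_k}B_{ij}(y). Then H_{ijk}(y) = 0 for all indices i,j,k ∈ {1,2,3} and all y ∈ ℝ³, i.e. the sigma model on the Manin triple (3|1) is torsionless. -/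

import Mathlib

open Real Matrix

/-- The torsion potential of a sigma model tensor `F`: its antisymmetric part. -/
noncomputable def Bpot (F : (Fin 3 → ℝ) → Matrix (Fin 3) (Fin 3) ℝ)
    (y : Fin 3 → ℝ) : Matrix (Fin 3) (Fin 3) ℝ :=
  (1 / 2 : ℝ) • (F y - (F y)ᵀ)

/-- The torsion `H_{ijk} = ∂ᵢ B_{jk} + ∂ⱼ B_{ki} + ∂ₖ B_{ij}` of a sigma model
tensor `F`, where `∂ᵢ` is the partial derivative in the `i`-th coordinate. -/
noncomputable def torsionH (F : (Fin 3 → ℝ) → Matrix (Fin 3) (Fin 3) ℝ)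
    (y : Fin 3 → ℝ) (i j k : Fin 3) : ℝ :=
  deriv (fun t => Bpot F (Function.update y i t) j k) (y i) +
  deriv (fun t => Bpot F (Function.update y j t) k i) (y j) +
  deriv (fun t => Bpot F (Function.update y k t) i j) (y k)

/-- The tensor `F` of the sigma model on the Manin triple `(3|1)`. -/
noncomputable def F31 (p u v w q z : ℝ) (y : Fin 3 → ℝ) : Matrix (Fin 3) (Fin 3) ℝ :=
  !![p, (u - v + (u + v) * exp (-(2 * y 0))) / 2, (-u + v + (u + v) * exp (-(2 * y 0))) / 2;
     (w - z + (w + z) * exp (-(2 * y 0))) / 2,  q,  -q;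
     (-w + z + (w + z) * exp (-(2 * y 0))) / 2, -q,  q]

lemma Bpot_apply' (F : (Fin 3 → ℝ) → Matrix (Fin 3) (Fin 3) ℝ) (y : Fin 3 → ℝ)
    (j k : Fin 3) : Bpot F y j k = (1/2 : ℝ) * (F y j k - F y k j) := by
  simp [Bpot, Matrix.smul_apply, Matrix.sub_apply, Matrix.transpose_apply]

lemma key_deriv' (a b c d : ℝ) (t : ℝ) :
    deriv (fun x => (a + b * rexp (-(2*x)))/2 - (c + d * rexp (-(2*x)))/2) t
      = (d - b) * rexp (-(2*t)) := by
  have h : HasDerivAt (fun x : ℝ => rexp (-(2*x))) (rexp (-(2*t)) * (-2)) t := by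
    have := ((hasDerivAt_id t).const_mul (2:ℝ)).neg.exp
    simpa using this
  have h2 : HasDerivAt (fun x => (a + b * rexp (-(2*x)))/2 - (c + d * rexp (-(2*x)))/2)
      ((d - b) * rexp (-(2*t))) t := by
    have := (((h.const_mul b).const_add a).div_const 2).sub
      (((h.const_mul d).const_add c).div_const 2)
    exact this.congr_deriv (by ring)
  exact h2.deriv

set_option maxHeartbeats 2000000 in
/-- The sigma model on the Manin triple `(3|1)` is torsionless. -/
theorem torsion31_eq_zero (p u v w q z : ℝ) :
    ∀ (y : Fin 3 → ℝ) (i j k : Fin 3), torsionH (F31 p u v w q z) y i j k = 0 := by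
  intro y i j k
  fin_cases i <;> fin_cases j <;> fin_cases k <;>
    (simp only [torsionH, Bpot_apply', F31, Function.update]; simp) <;>
    (try rw [key_deriv', key_deriv']) <;> ring
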